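/- Let h be analytic and univalent on 𝔻 with h(0) = 0, h'(0) = 1 (so Re(1 + z h''(z)/h'(z)) > (1 - 4|z| + |z|²)/(1 - |z|²) by standard distortion theory). Then the function u(z) = h(z) + (1-|z|²)(1/2)z h'(z) has positive Jacobian (is sense-preserving) on the disk |z| < √7 - 2. -/

import Mathlib

open Filter Topology Metric Set

/-- If `h` is analytic on the unit ball with `deriv h 0 = 1` and satisfies the Koebe-type
lower bound on `Re (1 + z h''/h')`, then `deriv h` does not vanish on the ball. -/
lemma deriv_ne_zero_aux (h : ℂ → ℂ)
    (hd : DifferentiableOn ℂ h (Metric.ball 0 1))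
    (h1 : deriv h 0 = 1)
    (hkoebe : ∀ z ∈ Metric.ball (0 : ℂ) 1,
      (1 - 4*‖z‖ + ‖z‖^2) / (1 - ‖z‖^2) ≤ (1 + z * deriv (deriv h) z / deriv h z).re)
    {z₀ : ℂ} (hz₀ : z₀ ∈ Metric.ball (0 : ℂ) 1) : deriv h z₀ ≠ 0 := by
  intro hf0
  have hz₀ne : z₀ ≠ 0 := by
    rintro rfl
    rw [h1] at hf0
    exact one_ne_zero hf0
  have hAnh : AnalyticOnNhd ℂ h (Metric.ball 0 1) := hd.analyticOnNhd Metric.isOpen_ball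
  have hAf : AnalyticOnNhd ℂ (deriv h) (Metric.ball 0 1) := hAnh.deriv
  have fA : AnalyticAt ℂ (deriv h) z₀ := hAf z₀ hz₀
  -- `deriv h` is not eventually zero near `z₀` (identity principle + `deriv h 0 = 1`)
  have hne : ¬ ∀ᶠ z in 𝓝 z₀, deriv h z = 0 := by
    intro hev
    have hEq : Set.EqOn (deriv h) 0 (Metric.ball 0 1) :=
      hAf.eqOn_zero_of_preconnected_of_eventuallyEq_zero
        (convex_ball (0:ℂ) 1).isPreconnected hz₀ hev
    have h0mem : (0:ℂ) ∈ Metric.ball (0:ℂ) 1 := Metric.mem_ball_self one_pos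
    have := hEq h0mem
    rw [h1] at this
    exact one_ne_zero this
  obtain ⟨n, g, hg, hg0, hfg⟩ := fA.exists_eventuallyEq_pow_smul_nonzero_iff.mpr hne
  obtain ⟨m, rfl⟩ : ∃ m, n = m + 1 := by
    cases n with
    | zero =>
      exfalso
      have := hfg.self_of_nhds
      simp [hf0] at this
      exact hg0 this.symm
    | succ m => exact ⟨m, rfl⟩
  -- factorization and derivative formula near z₀
  have hfg' : deriv h =ᶠ[𝓝 z₀] fun w => (w - z₀)^(m+1) * g w := by
    filter_upwards [hfg] with w hw
    simpa [smul_eq_mul] using hw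
  have hgd : ∀ᶠ z in 𝓝 z₀, DifferentiableAt ℂ g z :=
    hg.eventually_analyticAt.mono fun z hz => hz.differentiableAt
  have hderiv_eq : deriv (deriv h) =ᶠ[𝓝 z₀] deriv (fun w => (w - z₀)^(m+1) * g w) :=
    hfg'.deriv
  have hcomp : ∀ᶠ z in 𝓝 z₀, deriv (deriv h) z
      = (m+1) * (z - z₀)^m * g z + (z - z₀)^(m+1) * deriv g z := by
    filter_upwards [hderiv_eq, hgd] with z hz1 hz2
    rw [hz1]
    have hpow : HasDerivAt (fun w : ℂ => (w - z₀)^(m+1)) ((m+1) * (z - z₀)^m) z := by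
      have := ((hasDerivAt_id z).sub_const z₀).fun_pow (m+1)
      simpa using this
    exact (hpow.mul hz2.hasDerivAt).deriv
  have hgne : ∀ᶠ z in 𝓝 z₀, g z ≠ 0 := hg.continuousAt.eventually_ne hg0
  -- the ray approaching z₀
  set γ : ℝ → ℂ := fun t => (1 - (t:ℂ)) * z₀ with hγdef
  have hγc : Continuous γ := by
    apply Continuous.mul _ continuous_const
    exact continuous_const.sub Complex.continuous_ofReal
  have hγnhds : Tendsto γ (𝓝[>] (0:ℝ)) (𝓝 z₀) := by
    have h0 : γ 0 = z₀ := by simp [hγdef]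
    have := hγc.tendsto 0
    rw [h0] at this
    exact this.mono_left nhdsWithin_le_nhds
  have htpos : ∀ᶠ t in 𝓝[>] (0:ℝ), 0 < t := self_mem_nhdsWithin
  set φ : ℂ → ℝ := fun z => (1 + z * deriv (deriv h) z / deriv h z).re with hφdef
  -- formula for φ along the ray
  have E_formula : (fun t => φ (γ t)) =ᶠ[𝓝[>] (0:ℝ)]
      (fun t => (1 - (m+1) * (1-t)/t) + (γ t * deriv g (γ t) / g (γ t)).re) := by
    filter_upwards [hγnhds.eventually hfg', hγnhds.eventually hcomp,
      hγnhds.eventually hgne, htpos] with t hw1 hw2 hw3 ht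
    have htne : (t:ℂ) ≠ 0 := by exact_mod_cast ht.ne'
    have hwne : γ t - z₀ ≠ 0 := by
      have : γ t - z₀ = -(t:ℂ) * z₀ := by rw [hγdef]; ring
      rw [this]
      exact mul_ne_zero (neg_ne_zero.mpr htne) hz₀ne
    have key : (1 : ℂ) + γ t * deriv (deriv h) (γ t) / deriv h (γ t)
        = ((1 - (m+1) * (1-t)/t : ℝ) : ℂ) + γ t * deriv g (γ t) / g (γ t) := by
      rw [hw1, hw2]
      have hz : γ t = (1 - (t:ℂ)) * z₀ := rfl
      push_cast
      field_simp [pow_ne_zero, hwne, hw3]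
      ring
    rw [hφdef]
    simp only [key, Complex.add_re, Complex.ofReal_re]
  -- tendsto atBot
  have h1t : Tendsto (fun t:ℝ => (1-t)/t) (𝓝[>] (0:ℝ)) atTop := by
    have h1 : Tendsto (fun t:ℝ => t⁻¹ + (-1)) (𝓝[>] (0:ℝ)) atTop :=
      tendsto_atTop_add_const_right _ _ tendsto_inv_nhdsGT_zero
    refine h1.congr' ?_
    filter_upwards [htpos] with t ht
    field_simp
    ring
  have hlin : Tendsto (fun t:ℝ => 1 - (m+1) * (1-t)/t) (𝓝[>] (0:ℝ)) atBot := by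
    have h2 : Tendsto (fun t:ℝ => ((m:ℝ)+1) * ((1-t)/t)) (𝓝[>] (0:ℝ)) atTop :=
      h1t.const_mul_atTop (by positivity)
    have h3 : Tendsto (fun t:ℝ => -(((m:ℝ)+1) * ((1-t)/t))) (𝓝[>] (0:ℝ)) atBot :=
      tendsto_neg_atTop_atBot.comp h2
    have h4 := tendsto_atBot_add_const_left _ (1:ℝ) h3
    refine h4.congr fun t => ?_
    push_cast
    ring
  have hQ : Tendsto (fun t => (γ t * deriv g (γ t) / g (γ t)).re) (𝓝[>] (0:ℝ))
      (𝓝 ((z₀ * deriv g z₀ / g z₀).re)) := by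
    obtain ⟨v, hv_mem, hv⟩ := hg.exists_mem_nhds_analyticOnNhd
    have hdg : ContinuousAt (deriv g) z₀ :=
      (hv.deriv z₀ (mem_of_mem_nhds hv_mem)).continuousAt
    have hc : ContinuousAt (fun z : ℂ => z * deriv g z / g z) z₀ :=
      (continuousAt_id.mul hdg).div hg.continuousAt hg0
    exact (Complex.continuous_re.continuousAt.comp hc).tendsto.comp hγnhds
  have hbot : Tendsto (fun t => φ (γ t)) (𝓝[>] (0:ℝ)) atBot :=
    (hlin.atBot_add hQ).congr' E_formula.symm
  -- lower bound from Koebe hypothesis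
  set R : ℝ := ‖z₀‖ with hRdef
  have hR1 : R < 1 := by simpa [hRdef] using hz₀
  set R' : ℝ := (R + 1)/2 with hR'def
  have hR0 : 0 ≤ R := norm_nonneg _
  have hRR' : R < R' := by rw [hR'def]; linarith
  have hR'1 : R' < 1 := by rw [hR'def]; linarith
  have hR'0 : 0 ≤ R' := by rw [hR'def]; linarith
  set c : ℝ := -4/(1 - R'^2) with hcdef
  have E1 : ∀ᶠ t in 𝓝[>] (0:ℝ), c ≤ φ (γ t) := by
    have hnormt : Tendsto (fun t => ‖γ t‖) (𝓝[>] (0:ℝ)) (𝓝 R) :=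
      (continuous_norm.tendsto z₀).comp hγnhds
    filter_upwards [hnormt.eventually_lt_const hRR'] with t htn
    have hball : γ t ∈ Metric.ball (0:ℂ) 1 :=
      mem_ball_zero_iff.mpr (htn.trans hR'1)
    have hk := hkoebe (γ t) hball
    refine le_trans ?_ hk
    set r : ℝ := ‖γ t‖
    have hr0 : 0 ≤ r := norm_nonneg _
    have hrR' : r ≤ R' := le_of_lt htn
    have d1 : 0 < 1 - r^2 := by nlinarith
    have d2 : 0 < 1 - R'^2 := by nlinarith
    rw [hcdef, div_le_div_iff₀ d2 d1]
    nlinarith [sq_nonneg (r - 2), mul_nonneg (by nlinarith [sq_nonneg (r-2)] : (0:ℝ) ≤ 1 - 4*r + r^2 + 4) d2.le]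
  have E2 : ∀ᶠ t in 𝓝[>] (0:ℝ), φ (γ t) ≤ c - 1 :=
    hbot.eventually (eventually_le_atBot (c - 1))
  obtain ⟨t, ht1, ht2⟩ := (E1.and E2).exists
  linarith

theorem stmt_9 (h : ℂ → ℂ)
    (hd : DifferentiableOn ℂ h (Metric.ball 0 1))
    (hinj : Set.InjOn h (Metric.ball 0 1))
    (h0 : h 0 = 0) (h1 : deriv h 0 = 1)
    (hkoebe : ∀ z ∈ Metric.ball (0 : ℂ) 1,
      (1 - 4*‖z‖ + ‖z‖^2) / (1 - ‖z‖^2) ≤ (1 + z * deriv (deriv h) z / deriv h z).re) :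
    ∀ z : ℂ, ‖z‖ < Real.sqrt 7 - 2 →
      ‖(deriv h z / 2) * (((2 - ‖z‖^2 : ℝ) : ℂ) + ((1 - ‖z‖^2 : ℝ) : ℂ) *
          (1 + z * deriv (deriv h) z / deriv h z))‖^2
        - ‖-(1/2 : ℂ) * z^2 * deriv h z‖^2 > 0 := by
  intro z hz
  have h7 : Real.sqrt 7 < 3 := by
    rw [Real.sqrt_lt' (by norm_num : (0:ℝ) < 3)]
    norm_num
  set r : ℝ := ‖z‖ with hrdef
  have hr0 : 0 ≤ r := norm_nonneg _
  have hr1 : r < 1 := by linarith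
  have hball : z ∈ Metric.ball (0:ℂ) 1 := mem_ball_zero_iff.mpr hr1
  have hne : deriv h z ≠ 0 := deriv_ne_zero_aux h hd h1 hkoebe hball
  have h3r : r^2 < 3 - 4*r := by
    have hlt : r + 2 < Real.sqrt 7 := by linarith
    have h2 : (r + 2)^2 < (Real.sqrt 7)^2 :=
      pow_lt_pow_left₀ hlt (by linarith) (by norm_num)
    rw [Real.sq_sqrt (by norm_num : (7:ℝ) ≥ 0)] at h2
    nlinarith
  set K : ℂ := 1 + z * deriv (deriv h) z / deriv h z with hKdef
  set A : ℂ := ((2 - r^2 : ℝ) : ℂ) + ((1 - r^2 : ℝ) : ℂ) * K with hAdef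
  have hd1 : 0 < 1 - r^2 := by nlinarith
  have hKre : (1 - 4*r + r^2)/(1 - r^2) ≤ K.re := hkoebe z hball
  have hAre : (3 - 4*r : ℝ) ≤ A.re := by
    have hAre' : A.re = (2 - r^2) + (1 - r^2) * K.re := by
      rw [hAdef]
      simp [Complex.add_re, Complex.mul_re, ← Complex.ofReal_pow,
        Complex.ofReal_re, Complex.ofReal_im]
    rw [hAre']
    have := mul_le_mul_of_nonneg_left hKre hd1.le
    rw [mul_div_cancel₀ _ hd1.ne'] at this
    linarith
  have hAnorm : (3 - 4*r : ℝ) ≤ ‖A‖ := le_trans hAre (Complex.re_le_norm A)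
  have hA2 : r^4 < ‖A‖^2 := by nlinarith [sq_nonneg r]
  have hLHS : ‖(deriv h z / 2) * A‖^2 = ‖deriv h z‖^2 / 4 * ‖A‖^2 := by
    rw [norm_mul, norm_div]
    norm_num
    ring
  have hRHS : ‖-(1/2 : ℂ) * z^2 * deriv h z‖^2 = ‖deriv h z‖^2 / 4 * r^4 := by
    rw [norm_mul, norm_mul, norm_neg, norm_pow, ← hrdef]
    norm_num
    ring
  rw [hLHS, hRHS]
  have hdpos : 0 < ‖deriv h z‖^2 := pow_pos (norm_pos_iff.mpr hne) 2
  nlinarith [mul_pos hdpos (sub_pos.mpr hA2)]
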